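/- In the free group F₄ on four generators a₁, a₂, a₃, a₄, let w = a₂⁻¹a₃a₁a₂⁻¹a₃a₁a₂⁻¹. For every integer k, one has w^k·(a₂⁻¹a₂⁻¹a₃a₁)·w^{-k} ≠ a₃a₁a₂⁻¹a₂⁻¹. -/

import Mathlib

/-- The generators of the free group on four generators:
`a 0 = a₁`, `a 1 = a₂`, `a 2 = a₃`, `a 3 = a₄`. -/
def a (i : Fin 4) : FreeGroup (Fin 4) := FreeGroup.of i

/-- images of the generators in `Perm (Fin 6)` -/
def pA : Equiv.Perm (Fin 6) := ⟨![4,0,5,2,1,3], ![1,4,3,5,0,2], by decide, by decide⟩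
def pB : Equiv.Perm (Fin 6) := ⟨![4,3,2,0,1,5], ![3,4,2,1,0,5], by decide, by decide⟩
def pC : Equiv.Perm (Fin 6) := ⟨![1,4,5,0,2,3], ![3,0,4,5,1,2], by decide, by decide⟩

def f : FreeGroup (Fin 4) →* Equiv.Perm (Fin 6) := FreeGroup.lift ![pA, pB, pC, 1]

def gW : Equiv.Perm (Fin 6) := pB⁻¹ * pC * pA * pB⁻¹ * pC * pA * pB⁻¹
def gU : Equiv.Perm (Fin 6) := pB⁻¹ * pB⁻¹ * pC * pA
def gV : Equiv.Perm (Fin 6) := pC * pA * pB⁻¹ * pB⁻¹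

set_option maxRecDepth 20000 in
lemma key : ∀ j : Fin 6, gW ^ (j : ℕ) * gU * (gW ^ (j : ℕ))⁻¹ ≠ gV := by decide

lemma key' (k : ℤ) : gW ^ k * gU * gW ^ (-k) ≠ gV := by
  have h6 : gW ^ (6 : ℕ) = 1 := by
    set_option maxRecDepth 20000 in decide
  have h1 : gW ^ k = gW ^ ((k % 6).toNat) := by
    calc gW ^ k = gW ^ (6 * (k / 6) + k % 6) := by rw [Int.mul_ediv_add_emod]
      _ = ((gW ^ (6 : ℕ)) ^ (k / 6)) * gW ^ (k % 6) := by
            rw [zpow_add, zpow_mul, zpow_ofNat]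
      _ = gW ^ (k % 6) := by rw [h6, one_zpow, one_mul]
      _ = gW ^ ((k % 6).toNat) := by
            rw [← zpow_natCast, Int.toNat_of_nonneg (Int.emod_nonneg k (by norm_num))]
  have hj : (k % 6).toNat < 6 := by omega
  have := key ⟨(k % 6).toNat, hj⟩
  rw [zpow_neg, h1]
  exact this

theorem stmt_12 (k : ℤ) :
    ((a 1)⁻¹ * a 2 * a 0 * (a 1)⁻¹ * a 2 * a 0 * (a 1)⁻¹) ^ k *
        ((a 1)⁻¹ * (a 1)⁻¹ * a 2 * a 0) *
        ((a 1)⁻¹ * a 2 * a 0 * (a 1)⁻¹ * a 2 * a 0 * (a 1)⁻¹) ^ (-k) ≠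
      a 2 * a 0 * (a 1)⁻¹ * (a 1)⁻¹ := by
  intro h
  have h2 := congrArg f h
  have e0 : f (a 0) = pA := by simp [f, a]
  have e1 : f (a 1) = pB := by simp [f, a]
  have e2 : f (a 2) = pC := by simp [f, a]
  simp only [map_mul, map_zpow, map_inv, e0, e1, e2] at h2
  exact key' k (by simpa [gW, gU, gV, mul_assoc] using h2)
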